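/- Let α, β be real numbers with α ≠ 0, and let 0 < ε < 1/2. Then the Lebesgue measure of the set {t ∈ [0,T] : ‖αt + β‖ ≤ ε} equals 2ε(T + O(1/|α|)), where ‖·‖ denotes distance to the nearest integer. More precisely, |μ({t ∈ [0,T] : ‖αt+β‖ ≤ ε}) − 2εT| ≤ 4ε/|α| + 2ε·min(T, 1/|α|). -/

import Mathlib

open MeasureTheory

open Set ENNReal

lemma key (ε a b : ℝ) (hε0 : 0 < ε) (hε : ε < 1/2) (hab : a ≤ b) :
    |(volume ((⋃ n : ℤ, Icc ((n:ℝ) - ε) ((n:ℝ) + ε)) ∩ Icc a b)).toReal - 2*ε*(b-a)| ≤ 4*ε := by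
  set U : Set ℝ := ⋃ n : ℤ, Icc ((n:ℝ) - ε) ((n:ℝ) + ε) with hU
  have hvol : ∀ n : ℤ, volume (Icc ((n:ℝ) - ε) ((n:ℝ) + ε)) = ENNReal.ofReal (2*ε) := by
    intro n; rw [Real.volume_Icc]; ring_nf
  have hfin : volume (U ∩ Icc a b) ≠ ⊤ :=
    ((measure_mono inter_subset_right).trans_lt (by rw [Real.volume_Icc]; exact ENNReal.ofReal_lt_top)).ne
  -- upper bound
  have hsub : U ∩ Icc a b ⊆ ⋃ n ∈ Finset.Icc ⌈a - ε⌉ ⌊b + ε⌋, Icc ((n:ℝ) - ε) ((n:ℝ) + ε) := by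
    rintro x ⟨hxU, hxa, hxb⟩
    obtain ⟨n, hn⟩ : ∃ n : ℤ, x ∈ Icc ((n:ℝ) - ε) ((n:ℝ) + ε) := by simpa [hU] using hxU
    have hmem : n ∈ Finset.Icc ⌈a - ε⌉ ⌊b + ε⌋ := by
      rw [Finset.mem_Icc]
      refine ⟨Int.ceil_le.mpr (by linarith [hn.2]), Int.le_floor.mpr (by linarith [hn.1])⟩
    exact Set.mem_biUnion hmem hn
  have hup : volume (U ∩ Icc a b) ≤ (Finset.Icc ⌈a - ε⌉ ⌊b + ε⌋).card * ENNReal.ofReal (2*ε) := by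
    refine (measure_mono hsub).trans ((measure_biUnion_finset_le _ _).trans ?_)
    simp [hvol]
  have hcardu : ((Finset.Icc ⌈a - ε⌉ ⌊b + ε⌋).card : ℝ) ≤ b - a + 2*ε + 1 := by
    rw [Int.card_Icc]
    have h1 : ((⌊b + ε⌋ + 1 - ⌈a - ε⌉).toNat : ℤ) = max (⌊b + ε⌋ + 1 - ⌈a - ε⌉) 0 := Int.toNat_eq_max _
    have h2 : ((⌊b + ε⌋ + 1 - ⌈a - ε⌉).toNat : ℝ) = max ((⌊b + ε⌋:ℝ) + 1 - ⌈a - ε⌉) 0 := by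
      exact_mod_cast congrArg (Int.cast : ℤ → ℝ) h1
    rw [h2]
    have := Int.floor_le (b + ε)
    have := Int.le_ceil (a - ε)
    apply max_le <;> linarith
  -- lower bound
  have hsub2 : ⋃ n ∈ Finset.Icc ⌈a + ε⌉ ⌊b - ε⌋, Icc ((n:ℝ) - ε) ((n:ℝ) + ε) ⊆ U ∩ Icc a b := by
    intro x hx
    obtain ⟨n, hn, hx⟩ := Set.mem_iUnion₂.mp hx
    rw [Finset.mem_Icc] at hn
    have h1 : a + ε ≤ (n:ℝ) := (Int.le_ceil _).trans (by exact_mod_cast hn.1)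
    have h2 : (n:ℝ) ≤ b - ε := le_trans (by exact_mod_cast hn.2) (Int.floor_le _)
    exact ⟨Set.mem_iUnion.mpr ⟨n, hx⟩, by constructor <;> [linarith [hx.1]; linarith [hx.2]]⟩
  have hdisj : (↑(Finset.Icc ⌈a + ε⌉ ⌊b - ε⌋) : Set ℤ).PairwiseDisjoint
      (fun n : ℤ => Icc ((n:ℝ) - ε) ((n:ℝ) + ε)) := by
    intro m _ n _ hmn
    apply Set.disjoint_left.mpr
    rintro x ⟨h1, h2⟩ ⟨h3, h4⟩
    have : |(m:ℝ) - n| < 1 := by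
      rw [abs_lt]; constructor <;> linarith
    rw [abs_lt] at this
    have h5 : m = n := by
      have c1 : ((m:ℝ)) - n < 1 := this.2
      have c2 : (-1:ℝ) < (m:ℝ) - n := this.1
      have d1 : (m:ℝ) < n + 1 := by linarith
      have d2 : (n:ℝ) < m + 1 := by linarith
      have e1 : m < n + 1 := by exact_mod_cast d1
      have e2 : n < m + 1 := by exact_mod_cast d2
      omega
    exact hmn h5
  have hlow : ((Finset.Icc ⌈a + ε⌉ ⌊b - ε⌋).card : ℝ≥0∞) * ENNReal.ofReal (2*ε) ≤ volume (U ∩ Icc a b) := by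
    refine le_trans ?_ (measure_mono hsub2)
    rw [measure_biUnion_finset hdisj (fun n _ => measurableSet_Icc)]
    simp [hvol]
  have hcardl : b - a - 2*ε - 1 ≤ ((Finset.Icc ⌈a + ε⌉ ⌊b - ε⌋).card : ℝ) := by
    rw [Int.card_Icc]
    have h1 : ((⌊b - ε⌋ + 1 - ⌈a + ε⌉).toNat : ℤ) = max (⌊b - ε⌋ + 1 - ⌈a + ε⌉) 0 := Int.toNat_eq_max _
    have h2 : ((⌊b - ε⌋ + 1 - ⌈a + ε⌉).toNat : ℝ) = max ((⌊b - ε⌋:ℝ) + 1 - ⌈a + ε⌉) 0 := by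
      exact_mod_cast congrArg (Int.cast : ℤ → ℝ) h1
    rw [h2]
    have h3 := Int.lt_floor_add_one (b - ε)
    have h4 := Int.ceil_lt_add_one (a + ε)
    exact le_trans (by linarith) (le_max_left _ _)
  -- convert to reals
  have hupR : (volume (U ∩ Icc a b)).toReal ≤ (b - a + 2*ε + 1) * (2*ε) := by
    have := ENNReal.toReal_mono (by finiteness) hup
    rw [ENNReal.toReal_mul, ENNReal.toReal_ofReal (by positivity)] at this
    refine this.trans ?_
    have : ((Finset.Icc ⌈a - ε⌉ ⌊b + ε⌋).card : ℝ≥0∞).toReal = ((Finset.Icc ⌈a - ε⌉ ⌊b + ε⌋).card : ℝ) := by simp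
    rw [this]
    nlinarith
  have hlowR : (b - a - 2*ε - 1) * (2*ε) ≤ (volume (U ∩ Icc a b)).toReal := by
    have := ENNReal.toReal_mono hfin hlow
    rw [ENNReal.toReal_mul, ENNReal.toReal_ofReal (by positivity)] at this
    have hc : ((Finset.Icc ⌈a + ε⌉ ⌊b - ε⌋).card : ℝ≥0∞).toReal = ((Finset.Icc ⌈a + ε⌉ ⌊b - ε⌋).card : ℝ) := by simp
    rw [hc] at this
    nlinarith
  rw [abs_le]
  constructor <;> nlinarith

/-- distance to the nearest integer -/
noncomputable def nint (x : ℝ) : ℝ := |x - round x|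

lemma nint_set_eq (ε : ℝ) (hε0 : 0 < ε) (hε : ε < 1/2) :
    {x : ℝ | nint x ≤ ε} = ⋃ n : ℤ, Icc ((n:ℝ) - ε) ((n:ℝ) + ε) := by
  ext x
  simp only [mem_setOf_eq, mem_iUnion, mem_Icc, nint]
  constructor
  · intro h
    exact ⟨round x, by rw [abs_le] at h; constructor <;> linarith [h.1, h.2]⟩
  · rintro ⟨n, h1, h2⟩
    have habs : |x - n| ≤ ε := abs_le.mpr ⟨by linarith, by linarith⟩
    have hr : round x = n := by
      have : round (x - n + n) = round (x - n) + n := round_add_intCast _ _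
      have hz : round (x - (n:ℝ)) = 0 := by
        rw [round_eq_zero_iff]
        rw [abs_le] at habs
        constructor <;> [linarith [habs.1]; (simp; linarith [habs.2])]
      have hx : x - (n:ℝ) + n = x := by ring
      rw [hx, hz, zero_add] at this
      exact this
    rw [hr]; exact habs

lemma preimage_affine_vol (α β : ℝ) (hα : α ≠ 0) (s : Set ℝ) :
    volume ((fun t => α * t + β) ⁻¹' s) = ENNReal.ofReal |α⁻¹| * volume s := by
  have h : (fun t => α * t + β) ⁻¹' s = (fun t => α * t) ⁻¹' ((fun x => x + β) ⁻¹' s) := rfl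
  rw [h, Real.volume_preimage_mul_left hα, measure_preimage_add_right]

theorem stmt0 (α β ε T : ℝ) (hα : α ≠ 0) (hε0 : 0 < ε) (hε : ε < 1/2) (hT : 0 ≤ T) :
    |(volume {t : ℝ | t ∈ Set.Icc 0 T ∧ nint (α * t + β) ≤ ε}).toReal - 2 * ε * T|
      ≤ 4 * ε / |α| + 2 * ε * min T (1 / |α|) := by
  have hmin : 0 ≤ 2 * ε * min T (1 / |α|) := by
    have : 0 < |α| := abs_pos.mpr hα
    have : 0 ≤ min T (1 / |α|) := le_min hT (by positivity)
    positivity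
  have habs : 0 < |α| := abs_pos.mpr hα
  suffices h : |(volume {t : ℝ | t ∈ Set.Icc 0 T ∧ nint (α * t + β) ≤ ε}).toReal - 2 * ε * T| ≤ 4 * ε / |α| by
    linarith
  set U : Set ℝ := ⋃ n : ℤ, Icc ((n:ℝ) - ε) ((n:ℝ) + ε) with hU
  have hmem : ∀ x : ℝ, nint x ≤ ε ↔ x ∈ U := by
    intro x
    rw [hU, ← nint_set_eq ε hε0 hε]; rfl
  rcases hα.lt_or_gt with hneg | hpos
  · -- α < 0
    have hset : {t : ℝ | t ∈ Set.Icc 0 T ∧ nint (α * t + β) ≤ ε}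
        = (fun t => α * t + β) ⁻¹' (U ∩ Icc (α * T + β) β) := by
      ext t
      simp only [mem_setOf_eq, mem_preimage, mem_inter_iff, mem_Icc, hmem]
      constructor
      · rintro ⟨⟨h1, h2⟩, h3⟩
        exact ⟨h3, by nlinarith, by nlinarith⟩
      · rintro ⟨h3, h1, h2⟩
        refine ⟨⟨?_, ?_⟩, h3⟩ <;> nlinarith
    rw [hset, preimage_affine_vol α β hα, ENNReal.toReal_mul, ENNReal.toReal_ofReal (abs_nonneg _)]
    have hkey := key ε (α * T + β) β hε0 hε (by nlinarith)
    rw [← hU] at hkey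
    have hba : β - (α * T + β) = |α| * T := by rw [abs_of_neg hneg]; ring
    rw [hba] at hkey
    set X := (volume (U ∩ Icc (α * T + β) β)).toReal
    have hid : |α⁻¹| * X - 2 * ε * T = |α|⁻¹ * (X - 2 * ε * (|α| * T)) := by
      rw [abs_inv]; field_simp
    rw [hid, abs_mul, abs_of_nonneg (by positivity : (0:ℝ) ≤ |α|⁻¹)]
    rw [div_eq_inv_mul]
    exact mul_le_mul_of_nonneg_left hkey (by positivity)
  · -- α > 0
    have hset : {t : ℝ | t ∈ Set.Icc 0 T ∧ nint (α * t + β) ≤ ε}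
        = (fun t => α * t + β) ⁻¹' (U ∩ Icc β (α * T + β)) := by
      ext t
      simp only [mem_setOf_eq, mem_preimage, mem_inter_iff, mem_Icc, hmem]
      constructor
      · rintro ⟨⟨h1, h2⟩, h3⟩
        exact ⟨h3, by nlinarith, by nlinarith⟩
      · rintro ⟨h3, h1, h2⟩
        refine ⟨⟨?_, ?_⟩, h3⟩ <;> nlinarith
    rw [hset, preimage_affine_vol α β hα, ENNReal.toReal_mul, ENNReal.toReal_ofReal (abs_nonneg _)]
    have hkey := key ε β (α * T + β) hε0 hε (by nlinarith)
    rw [← hU] at hkey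
    have hba : α * T + β - β = |α| * T := by rw [abs_of_pos hpos]; ring
    rw [hba] at hkey
    set X := (volume (U ∩ Icc β (α * T + β))).toReal
    have hid : |α⁻¹| * X - 2 * ε * T = |α|⁻¹ * (X - 2 * ε * (|α| * T)) := by
      rw [abs_inv]; field_simp
    rw [hid, abs_mul, abs_of_nonneg (by positivity : (0:ℝ) ≤ |α|⁻¹)]
    rw [div_eq_inv_mul]
    exact mul_le_mul_of_nonneg_left hkey (by positivity)
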